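/- arXiv:2406.11708 — 3 statements merged into one kernel-verified Lean document; each statement's English description precedes it below -/
import Mathlib

section
/- Let 0 < γ < 1, t > 0, and let f : [0,t] → ℝ be continuously differentiable. Then (1/Γ(1−γ)) ∫_0^t (t−τ)^{−γ} f′(τ) dτ = (1/Γ(1−γ)) [ (γ/(1−γ)) t^{1−γ} ∫_0^1 ((f(t) − f(t − tτ)) / (tτ)) · (1−γ) τ^{−γ} dτ + (f(t) − f(0)) t^{−γ} ], where (1−γ) τ^{−γ} on (0,1) is the probability density of the Beta(1−γ, 1) distribution. -/
open MeasureTheory Real Set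

theorem stmt_5 {γ t : ℝ} (hγ : 0 < γ) (hγ1 : γ < 1) (ht : 0 < t)
    {f f' : ℝ → ℝ}
    (hf : ∀ τ ∈ Set.Icc 0 t, HasDerivWithinAt f (f' τ) (Set.Icc 0 t) τ)
    (hf' : ContinuousOn f' (Set.Icc 0 t)) :
    (1 / Real.Gamma (1 - γ)) * (∫ τ in Set.Ioo 0 t, (t - τ) ^ (-γ) * f' τ) =
      (1 / Real.Gamma (1 - γ)) *
        ((γ / (1 - γ)) * t ^ (1 - γ) *
            (∫ τ in Set.Ioo (0 : ℝ) 1,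
              ((f t - f (t - t * τ)) / (t * τ)) * ((1 - γ) * τ ^ (-γ)))
          + (f t - f 0) * t ^ (-γ)) := by
  have h1γ : (0:ℝ) < 1 - γ := by linarith
  have ht' : t ≠ 0 := ht.ne'
  have htmem : t ∈ Icc (0:ℝ) t := ⟨ht.le, le_rfl⟩
  have h0mem : (0:ℝ) ∈ Icc (0:ℝ) t := ⟨le_rfl, ht.le⟩
  -- bound for f'
  obtain ⟨M, hM⟩ := IsCompact.exists_bound_of_continuousOn isCompact_Icc hf'
  have hM0 : 0 ≤ M := le_trans (norm_nonneg _) (hM t htmem)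
  -- Lipschitz estimate
  have hLip : ∀ s ∈ Icc (0:ℝ) t, |f t - f (t - s)| ≤ M * s := by
    intro s hs
    have h2 : t - s ∈ Icc (0:ℝ) t := ⟨by linarith [hs.2], by linarith [hs.1]⟩
    have := (convex_Icc (0:ℝ) t).norm_image_sub_le_of_norm_hasDerivWithin_le hf hM h2 htmem
    have h3 : t - (t - s) = s := by ring
    simpa [Real.norm_eq_abs, h3, abs_of_nonneg hs.1] using this
  -- continuity of f on Icc
  have hfc : ContinuousOn f (Icc 0 t) := fun x hx => (hf x hx).continuousWithinAt
  -- auxiliary functions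
  set ψ1 : ℝ → ℝ := fun s => s ^ (-γ) * f' (t - s) with hψ1
  set ψ2 : ℝ → ℝ := fun s => (f t - f (t - s)) * s ^ (-γ - 1) with hψ2
  -- integrability of s ^ (-γ) on Ioo 0 t
  have hrpow : IntegrableOn (fun s : ℝ => s ^ (-γ)) (Ioo 0 t) := by
    have : IntervalIntegrable (fun s : ℝ => s ^ (-γ)) volume 0 t :=
      intervalIntegral.intervalIntegrable_rpow' (by linarith)
    exact ((intervalIntegrable_iff_integrableOn_Ioo_of_le ht.le).1 this)
  have hrpowM : IntegrableOn (fun s : ℝ => M * s ^ (-γ)) (Ioo 0 t) := hrpow.const_mul M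
  -- measurability pieces
  have hcontrpow : ∀ p : ℝ, ContinuousOn (fun s : ℝ => s ^ p) (Ioo 0 t) := by
    intro p
    exact fun s hs => (Real.continuousAt_rpow_const s p (Or.inl hs.1.ne')).continuousWithinAt
  have hmapsto : MapsTo (fun s : ℝ => t - s) (Ioo 0 t) (Icc 0 t) := by
    intro s hs
    constructor
    · show (0:ℝ) ≤ t - s; linarith [hs.2]
    · show t - s ≤ t; linarith [hs.1]
  have hsubcont : ContinuousOn (fun s : ℝ => t - s) (Ioo 0 t) :=
    (continuous_const.sub continuous_id).continuousOn
  have hψ1cont : ContinuousOn ψ1 (Ioo 0 t) :=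
    (hcontrpow (-γ)).mul (hf'.comp hsubcont hmapsto)
  have hψ2cont : ContinuousOn ψ2 (Ioo 0 t) :=
    (continuousOn_const.sub (hfc.comp hsubcont hmapsto)).mul (hcontrpow (-γ - 1))
  have hmeas : MeasurableSet (Ioo (0:ℝ) t) := measurableSet_Ioo
  -- integrability of ψ1
  have hψ1int : IntegrableOn ψ1 (Ioo 0 t) := by
    refine Integrable.mono' hrpowM (hψ1cont.aestronglyMeasurable hmeas) ?_
    refine (ae_restrict_iff' hmeas).2 (ae_of_all _ fun s hs => ?_)
    have h1 : (0:ℝ) ≤ s ^ (-γ) := Real.rpow_nonneg hs.1.le _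
    have h2 : |f' (t - s)| ≤ M := hM (t - s) (hmapsto hs)
    calc ‖ψ1 s‖ = s ^ (-γ) * |f' (t - s)| := by
          rw [hψ1]; simp [Real.norm_eq_abs, abs_mul, abs_of_nonneg h1]
      _ ≤ s ^ (-γ) * M := by exact mul_le_mul_of_nonneg_left h2 h1
      _ = M * s ^ (-γ) := by ring
  -- integrability of ψ2
  have hψ2bound : ∀ s ∈ Ioo (0:ℝ) t, ‖ψ2 s‖ ≤ M * s ^ (-γ) := by
    intro s hs
    have h1 : (0:ℝ) ≤ s ^ (-γ - 1) := Real.rpow_nonneg hs.1.le _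
    have h2 : |f t - f (t - s)| ≤ M * s := hLip s (Ioo_subset_Icc_self hs)
    have h3 : s * s ^ (-γ - 1) = s ^ (-γ) := by
      have h := Real.rpow_add hs.1 1 (-γ - 1)
      rw [Real.rpow_one] at h
      rw [← h]; congr 1; ring
    calc ‖ψ2 s‖ = |f t - f (t - s)| * s ^ (-γ - 1) := by
          rw [hψ2]; simp [Real.norm_eq_abs, abs_mul, abs_of_nonneg h1]
      _ ≤ (M * s) * s ^ (-γ - 1) := mul_le_mul_of_nonneg_right h2 h1
      _ = M * (s * s ^ (-γ - 1)) := by ring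
      _ = M * s ^ (-γ) := by rw [h3]
  have hψ2int : IntegrableOn ψ2 (Ioo 0 t) := by
    refine Integrable.mono' hrpowM (hψ2cont.aestronglyMeasurable hmeas) ?_
    exact (ae_restrict_iff' hmeas).2 (ae_of_all _ hψ2bound)
  -- the function for FTC
  set H : ℝ → ℝ := fun s => -(s ^ (-γ) * (f t - f (t - s))) with hH
  set D : ℝ → ℝ := fun s => γ * ψ2 s - ψ1 s with hD
  -- derivative of H
  have hfa : ∀ x ∈ Ioo (0:ℝ) t, HasDerivAt f (f' x) x := fun x hx =>
    (hf x (Ioo_subset_Icc_self hx)).hasDerivAt (Icc_mem_nhds hx.1 hx.2)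
  have hHderiv : ∀ s ∈ Ioo (0:ℝ) t, HasDerivAt H (D s) s := by
    intro s hs
    have hts : t - s ∈ Ioo (0:ℝ) t := ⟨by linarith [hs.2], by linarith [hs.1]⟩
    have h1 : HasDerivAt (fun s : ℝ => f (t - s)) (f' (t - s) * (-1)) s :=
      (hfa (t - s) hts).comp s ((hasDerivAt_id s).const_sub t)
    have h2 : HasDerivAt (fun s : ℝ => f t - f (t - s)) (f' (t - s)) s := by
      simpa using h1.const_sub (f t)
    have h3 : HasDerivAt (fun s : ℝ => s ^ (-γ)) (-γ * s ^ (-γ - 1)) s :=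
      Real.hasDerivAt_rpow_const (Or.inl hs.1.ne')
    have h4 := (h3.mul h2).neg
    refine HasDerivAt.congr_deriv h4 ?_
    rw [hD, hψ1, hψ2]; ring
  -- integrability of D
  have hDint : IntegrableOn D (Ioo 0 t) := ((hψ2int.const_mul γ).sub hψ1int)
  have hDintI : IntervalIntegrable D volume 0 t :=
    (intervalIntegrable_iff_integrableOn_Ioo_of_le ht.le).2 hDint
  -- limit of H at 0⁺
  have hH0 : Filter.Tendsto H (nhdsWithin 0 (Ioi 0)) (nhds 0) := by
    have hb : Filter.Tendsto (fun s : ℝ => M * s ^ (1 - γ)) (nhdsWithin 0 (Ioi 0)) (nhds 0) := by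
      have h1 : Filter.Tendsto (fun s : ℝ => s ^ (1 - γ)) (nhdsWithin 0 (Ioi 0)) (nhds 0) := by
        have := (Real.continuousAt_rpow_const 0 (1 - γ) (Or.inr h1γ.le)).continuousWithinAt
          (s := Ioi (0:ℝ))
        simpa [ContinuousWithinAt, Real.zero_rpow h1γ.ne'] using this
      simpa using h1.const_mul M
    refine squeeze_zero_norm' ?_ hb
    filter_upwards [Ioo_mem_nhdsGT_of_mem (by constructor <;> [rfl; exact ht])] with s hs
    have h1 : (0:ℝ) ≤ s ^ (-γ) := Real.rpow_nonneg hs.1.le _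
    have h3 : s ^ (-γ) * s = s ^ (1 - γ) := by
      have h := Real.rpow_add hs.1 (-γ) 1
      rw [Real.rpow_one] at h
      rw [← h]; congr 1; ring
    calc ‖H s‖ = s ^ (-γ) * |f t - f (t - s)| := by
          rw [hH]; simp [Real.norm_eq_abs, abs_mul, abs_of_nonneg h1]
      _ ≤ s ^ (-γ) * (M * s) := mul_le_mul_of_nonneg_left (hLip s (Ioo_subset_Icc_self hs)) h1
      _ = M * (s ^ (-γ) * s) := by ring
      _ = M * s ^ (1 - γ) := by rw [h3]
  -- limit of H at t⁻
  have hHt : Filter.Tendsto H (nhdsWithin t (Iio t))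
      (nhds (-(t ^ (-γ) * (f t - f 0)))) := by
    have h1 : Filter.Tendsto (fun s : ℝ => t - s) (nhdsWithin t (Iio t))
        (nhdsWithin 0 (Icc 0 t)) := by
      rw [tendsto_nhdsWithin_iff]
      constructor
      · have h0 : Filter.Tendsto (fun s : ℝ => t - s) (nhds t) (nhds (t - t)) :=
          (continuous_const.sub continuous_id).tendsto t
        rw [sub_self] at h0
        exact h0.mono_left nhdsWithin_le_nhds
      · filter_upwards [Ioo_mem_nhdsLT_of_mem ⟨ht, le_rfl⟩] with s hs
        exact ⟨by linarith [hs.2], by linarith [hs.1]⟩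
    have h2 : Filter.Tendsto (fun s : ℝ => f (t - s)) (nhdsWithin t (Iio t)) (nhds (f 0)) :=
      (hfc 0 h0mem).tendsto.comp h1
    have h3 : Filter.Tendsto (fun s : ℝ => s ^ (-γ)) (nhdsWithin t (Iio t))
        (nhds (t ^ (-γ))) :=
      ((Real.continuousAt_rpow_const t (-γ) (Or.inl ht')).tendsto).comp
        (Filter.tendsto_id.mono_left nhdsWithin_le_nhds)
    exact (h3.mul ((tendsto_const_nhds).sub h2)).neg
  -- FTC
  have hFTC : ∫ s in (0:ℝ)..t, D s = -(t ^ (-γ) * (f t - f 0)) - 0 :=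
    intervalIntegral.integral_eq_sub_of_hasDerivAt_of_tendsto ht hHderiv hDintI hH0 hHt
  have hFTC' : ∫ s in Ioo (0:ℝ) t, D s = -(t ^ (-γ) * (f t - f 0)) := by
    rw [← MeasureTheory.integral_Ioc_eq_integral_Ioo, ← intervalIntegral.integral_of_le ht.le]
    simpa using hFTC
  have hsplit : ∫ s in Ioo (0:ℝ) t, D s
      = γ * (∫ s in Ioo (0:ℝ) t, ψ2 s) - ∫ s in Ioo (0:ℝ) t, ψ1 s := by
    rw [hD]
    rw [MeasureTheory.integral_sub (hψ2int.const_mul γ) hψ1int,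
      MeasureTheory.integral_const_mul]
  have hkey : ∫ s in Ioo (0:ℝ) t, ψ1 s
      = γ * (∫ s in Ioo (0:ℝ) t, ψ2 s) + t ^ (-γ) * (f t - f 0) := by
    rw [hsplit] at hFTC'; linarith
  -- reflect the LHS
  have hLHS : (∫ τ in Set.Ioo 0 t, (t - τ) ^ (-γ) * f' τ) = ∫ s in Ioo (0:ℝ) t, ψ1 s := by
    have h1 : (∫ τ in Set.Ioo 0 t, (t - τ) ^ (-γ) * f' τ)
        = ∫ τ in (0:ℝ)..t, ψ1 (t - τ) := by
      rw [intervalIntegral.integral_of_le ht.le, MeasureTheory.integral_Ioc_eq_integral_Ioo]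
      refine setIntegral_congr_fun hmeas fun τ hτ => ?_
      rw [hψ1]; simp [sub_sub_cancel]
    rw [h1, intervalIntegral.integral_comp_sub_left ψ1 t]
    simp [intervalIntegral.integral_of_le ht.le, MeasureTheory.integral_Ioc_eq_integral_Ioo]
  -- rescale the RHS integral
  set φ : ℝ → ℝ := fun s => ((f t - f (t - s)) / s) * ((1 - γ) * (s / t) ^ (-γ)) with hφ
  have hRHS1 : (∫ τ in Set.Ioo (0 : ℝ) 1,
      ((f t - f (t - t * τ)) / (t * τ)) * ((1 - γ) * τ ^ (-γ)))
      = t⁻¹ * ∫ s in Ioo (0:ℝ) t, φ s := by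
    have h1 : (∫ τ in Set.Ioo (0 : ℝ) 1,
        ((f t - f (t - t * τ)) / (t * τ)) * ((1 - γ) * τ ^ (-γ)))
        = ∫ τ in (0:ℝ)..1, φ (t * τ) := by
      rw [intervalIntegral.integral_of_le zero_le_one,
        MeasureTheory.integral_Ioc_eq_integral_Ioo]
      refine setIntegral_congr_fun measurableSet_Ioo fun τ hτ => ?_
      simp only [hφ]
      have : t * τ / t = τ := by field_simp
      rw [this]
    rw [h1, intervalIntegral.integral_comp_mul_left φ ht']
    simp [intervalIntegral.integral_of_le ht.le, MeasureTheory.integral_Ioc_eq_integral_Ioo,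
      smul_eq_mul]
  have hRHS2 : (γ / (1 - γ)) * t ^ (1 - γ) * (t⁻¹ * ∫ s in Ioo (0:ℝ) t, φ s)
      = γ * ∫ s in Ioo (0:ℝ) t, ψ2 s := by
    have h1 : (γ / (1 - γ)) * t ^ (1 - γ) * (t⁻¹ * ∫ s in Ioo (0:ℝ) t, φ s)
        = ∫ s in Ioo (0:ℝ) t, ((γ / (1 - γ)) * t ^ (1 - γ) * t⁻¹) * φ s := by
      rw [MeasureTheory.integral_const_mul]; ring
    rw [h1, ← MeasureTheory.integral_const_mul]
    refine setIntegral_congr_fun hmeas fun s hs => ?_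
    simp only [hφ, hψ2]
    have hs0 : (0:ℝ) < s := hs.1
    have hdiv : (s / t) ^ (-γ) = s ^ (-γ) / t ^ (-γ) := Real.div_rpow hs0.le ht.le _
    have ht1γ : t ^ (1 - γ) = t / t ^ γ := by
      rw [Real.rpow_sub ht, Real.rpow_one]
    have htneg : t ^ (-γ) = (t ^ γ)⁻¹ := Real.rpow_neg ht.le γ
    have hsneg : s ^ (-γ - 1) = s ^ (-γ) / s := by
      rw [Real.rpow_sub hs0, Real.rpow_one]
    have htγ : (0:ℝ) < t ^ γ := Real.rpow_pos_of_pos ht γ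
    rw [hdiv, ht1γ, htneg, hsneg]
    field_simp
  rw [hLHS, hRHS1, hRHS2, hkey]
  ring
end

section
/- Let 0 < γ ≤ γ_H < 1, t > 0, and let f : [0,t] → ℝ be continuously differentiable. Then ∫_0^t (t−τ)^{−γ} f′(τ) dτ = (γ/(1−γ_H)) t^{1−γ} ∫_0^1 τ^{γ_H−γ} ((f(t) − f(t − tτ))/(tτ)) · (1−γ_H) τ^{−γ_H} dτ + (f(t) − f(0)) t^{−γ}, where (1−γ_H) τ^{−γ_H} on (0,1) is the probability density of the Beta(1−γ_H, 1) distribution. -/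
open MeasureTheory Real Set

theorem stmt_13 {γ γH t : ℝ} (hγ : 0 < γ) (hγH : γ ≤ γH) (hγH1 : γH < 1) (ht : 0 < t)
    {f f' : ℝ → ℝ}
    (hf : ∀ τ ∈ Set.Icc 0 t, HasDerivWithinAt f (f' τ) (Set.Icc 0 t) τ)
    (hf' : ContinuousOn f' (Set.Icc 0 t)) :
    (∫ τ in Set.Ioo 0 t, (t - τ) ^ (-γ) * f' τ) =
      (γ / (1 - γH)) * t ^ (1 - γ) *
          (∫ τ in Set.Ioo (0 : ℝ) 1,
            τ ^ (γH - γ) * ((f t - f (t - t * τ)) / (t * τ)) * ((1 - γH) * τ ^ (-γH)))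
        + (f t - f 0) * t ^ (-γ) := by
  have hγ1 : γ < 1 := lt_of_le_of_lt hγH hγH1
  have hγH0 : (0:ℝ) < 1 - γH := by linarith
  have hcf : ContinuousOn f (Set.Icc 0 t) := fun x hx => (hf x hx).continuousWithinAt
  -- Lipschitz bound for f
  obtain ⟨C, hC⟩ : ∃ C, ∀ x ∈ Set.Icc (0:ℝ) t, |f' x| ≤ C := by
    obtain ⟨C, hC⟩ := isCompact_Icc.exists_bound_of_continuousOn hf'
    exact ⟨C, fun x hx => by simpa using hC x hx⟩
  have hC0 : 0 ≤ C := le_trans (abs_nonneg _) (hC 0 ⟨le_refl _, ht.le⟩)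
  have hlip : LipschitzOnWith (Real.toNNReal C) f (Set.Icc 0 t) := by
    apply (convex_Icc 0 t).lipschitzOnWith_of_nnnorm_hasDerivWithin_le hf
    intro x hx
    rw [← NNReal.coe_le_coe, coe_nnnorm, Real.coe_toNNReal _ hC0, Real.norm_eq_abs]
    exact hC x hx
  have hfb : ∀ σ ∈ Set.Icc (0:ℝ) t, |f t - f σ| ≤ C * (t - σ) := by
    intro σ hσ
    have := hlip.dist_le_mul t ⟨ht.le, le_refl _⟩ σ hσ
    rw [Real.dist_eq, Real.dist_eq, Real.coe_toNNReal _ hC0] at this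
    have h2 : |t - σ| = t - σ := abs_of_nonneg (by linarith [hσ.2])
    rwa [h2] at this
  set h₀ : ℝ → ℝ := fun σ => (t - σ) ^ (-γ - 1) * (f t - f σ) with hh₀
  -- integrability of (t-σ)^(-γ)
  have hint_rpow : IntervalIntegrable (fun σ => (t - σ) ^ (-γ)) volume 0 t := by
    have := (intervalIntegral.intervalIntegrable_rpow' (a := 0) (b := t) (r := -γ)
      (by linarith)).comp_sub_left t
    simpa using this.symm
  have hint2 : IntervalIntegrable (fun σ => (t - σ) ^ (-γ) * f' σ) volume 0 t :=
    hint_rpow.mul_continuousOn (by rwa [Set.uIcc_of_le ht.le])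
  -- integrability of h₀
  have hcont0 : ContinuousOn h₀ (Set.Ioo 0 t) := by
    apply ContinuousOn.mul
    · apply ContinuousOn.rpow_const (continuousOn_const.sub continuousOn_id)
      intro x hx
      refine Or.inl ?_
      simp only [Set.mem_Ioo] at hx
      intro hc
      change t - x = 0 at hc
      linarith [hx.2, sub_eq_zero.mp hc]
    · exact continuousOn_const.sub (hcf.mono Set.Ioo_subset_Icc_self)
  have hmes : AEStronglyMeasurable h₀ (volume.restrict (Set.uIoc 0 t)) := by
    rw [Set.uIoc_of_le ht.le,
      Measure.restrict_congr_set (MeasureTheory.Ioo_ae_eq_Ioc (a := (0:ℝ)) (b := t)).symm]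
    exact hcont0.aestronglyMeasurable measurableSet_Ioo
  have hbound : ∀ σ ∈ Set.Ioc (0:ℝ) t, ‖h₀ σ‖ ≤ ‖C * (t - σ) ^ (-γ)‖ := by
    intro σ hσ
    rcases eq_or_lt_of_le hσ.2 with h | h
    · subst h
      simp [hh₀, Real.zero_rpow (by linarith : -γ ≠ 0)]
    · have htσ : (0:ℝ) < t - σ := by linarith
      rw [Real.norm_eq_abs, Real.norm_eq_abs, hh₀, abs_mul,
        abs_of_nonneg (Real.rpow_nonneg htσ.le _), abs_mul,
        abs_of_nonneg hC0, abs_of_nonneg (Real.rpow_nonneg htσ.le _)]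
      calc (t - σ) ^ (-γ - 1) * |f t - f σ|
          ≤ (t - σ) ^ (-γ - 1) * (C * (t - σ)) := by
            apply mul_le_mul_of_nonneg_left (hfb σ ⟨hσ.1.le, hσ.2⟩)
              (Real.rpow_nonneg htσ.le _)
        _ = C * ((t - σ) ^ (-γ - 1) * (t - σ)) := by ring
        _ = C * (t - σ) ^ (-γ) := by
            rw [show (-γ : ℝ) = -γ - 1 + 1 by ring, Real.rpow_add_one htσ.ne']
            ring
  have hint1 : IntervalIntegrable h₀ volume 0 t := by
    apply (hint_rpow.const_mul C).mono_fun hmes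
    rw [Set.uIoc_of_le ht.le]
    exact (ae_restrict_iff' measurableSet_Ioc).mpr (ae_of_all _ hbound)
  -- FTC with G σ = (t-σ)^(-γ) * (f σ - f t)
  set G : ℝ → ℝ := fun σ => (t - σ) ^ (-γ) * (f σ - f t) with hG
  set g' : ℝ → ℝ := fun σ => -(γ * h₀ σ) + (t - σ) ^ (-γ) * f' σ with hg'
  have hGt : G t = 0 := by simp [hG]
  have hGcont : ContinuousOn G (Set.Icc 0 t) := by
    intro x hx
    rcases eq_or_lt_of_le hx.2 with hxt | hxt
    · -- x = t : squeeze
      subst hxt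
      rw [ContinuousWithinAt, hGt]
      apply squeeze_zero_norm' (a := fun σ => C * (x - σ) ^ (1 - γ))
      · filter_upwards [self_mem_nhdsWithin] with σ hσ
        rcases eq_or_lt_of_le (hσ.2 : σ ≤ x) with h | h
        · subst h
          simp [hG, Real.zero_rpow (by linarith : (1:ℝ) - γ ≠ 0)]
        · have htσ : (0:ℝ) < x - σ := by linarith
          rw [Real.norm_eq_abs, hG, abs_mul,
            abs_of_nonneg (Real.rpow_nonneg htσ.le _), abs_sub_comm]
          calc (x - σ) ^ (-γ) * |f x - f σ|
              ≤ (x - σ) ^ (-γ) * (C * (x - σ)) :=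
                mul_le_mul_of_nonneg_left (hfb σ ⟨hσ.1, h.le⟩ |>.trans_eq rfl)
                  (Real.rpow_nonneg htσ.le _)
            _ = C * ((x - σ) ^ (-γ) * (x - σ)) := by ring
            _ = C * (x - σ) ^ (1 - γ) := by
                rw [show (1:ℝ) - γ = -γ + 1 by ring, Real.rpow_add_one htσ.ne']
      · have h1 : Filter.Tendsto (fun σ : ℝ => x - σ) (nhdsWithin x (Set.Icc 0 x))
            (nhds 0) := by
          have : Filter.Tendsto (fun σ : ℝ => x - σ) (nhds x) (nhds (x - x)) :=
            (continuous_const.sub continuous_id).tendsto x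
          rw [sub_self] at this
          exact this.mono_left nhdsWithin_le_nhds
        have h2 := (Real.continuousAt_rpow_const 0 (1 - γ)
          (Or.inr (by linarith))).tendsto.comp h1
        rw [Real.zero_rpow (by linarith : (1:ℝ) - γ ≠ 0)] at h2
        simpa using h2.const_mul C
    · -- x < t
      have htx : (0:ℝ) < t - x := by linarith
      apply ContinuousWithinAt.mul
      · apply ContinuousAt.continuousWithinAt
        exact (Real.continuousAt_rpow_const _ _ (Or.inl htx.ne')).comp
          ((continuous_const.sub continuous_id).continuousAt)
      · exact (hcf x hx).sub continuousWithinAt_const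
  have hderiv : ∀ x ∈ Set.Ioo (0:ℝ) t, HasDerivWithinAt G (g' x) (Set.Ioi x) x := by
    intro x hx
    have htx : (0:ℝ) < t - x := by linarith [hx.2]
    have hs : HasDerivAt (fun σ : ℝ => t - σ) (-1) x := (hasDerivAt_id x).const_sub t
    have h1 := hs.rpow_const (p := -γ) (Or.inl htx.ne')
    have h2 : HasDerivAt f (f' x) x :=
      (hf x (Set.Ioo_subset_Icc_self hx)).hasDerivAt (Icc_mem_nhds hx.1 hx.2)
    have h3 := h1.mul (h2.sub_const (f t))
    have : HasDerivAt G (g' x) x := by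
      refine h3.congr_deriv ?_
      simp only [hg', hh₀]
      try ring
    exact this.hasDerivWithinAt
  have hA : IntervalIntegrable (fun σ => -(γ * h₀ σ)) volume 0 t := by
    exact (hint1.const_mul γ).neg
  have hg'int : IntervalIntegrable g' volume 0 t := hA.add hint2
  have hFTC : ∫ σ in (0:ℝ)..t, g' σ = G t - G 0 :=
    intervalIntegral.integral_eq_sub_of_hasDeriv_right_of_le ht.le hGcont hderiv hg'int
  have hsplit : ∫ σ in (0:ℝ)..t, g' σ =
      -(γ * ∫ σ in (0:ℝ)..t, h₀ σ) + ∫ σ in (0:ℝ)..t, (t - σ) ^ (-γ) * f' σ := by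
    rw [intervalIntegral.integral_add hA hint2,
      intervalIntegral.integral_neg, intervalIntegral.integral_const_mul]
  set J : ℝ := ∫ σ in (0:ℝ)..t, h₀ σ with hJ
  have hmain : ∫ σ in (0:ℝ)..t, (t - σ) ^ (-γ) * f' σ = γ * J + (f t - f 0) * t ^ (-γ) := by
    have hG0 : G 0 = t ^ (-γ) * (f 0 - f t) := by simp [hG]
    have := hsplit.symm.trans hFTC
    rw [hGt, hG0] at this
    linarith [this]
  -- the RHS integral
  have hRint : (∫ τ in Set.Ioo (0 : ℝ) 1,
      τ ^ (γH - γ) * ((f t - f (t - t * τ)) / (t * τ)) * ((1 - γH) * τ ^ (-γH)))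
      = (1 - γH) * t ^ γ * (t⁻¹ * J) := by
    have step1 : (∫ τ in Set.Ioo (0 : ℝ) 1,
        τ ^ (γH - γ) * ((f t - f (t - t * τ)) / (t * τ)) * ((1 - γH) * τ ^ (-γH)))
        = ∫ τ in Set.Ioo (0 : ℝ) 1, (1 - γH) * t ^ γ * h₀ (t - τ * t) := by
      apply setIntegral_congr_fun measurableSet_Ioo
      intro τ hτ
      have hτ0 : (0:ℝ) < τ := hτ.1
      have htτ : (0:ℝ) < t * τ := mul_pos ht hτ0
      have e1 : τ ^ (γH - γ) * τ ^ (-γH) = τ ^ (-γ) := by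
        rw [← Real.rpow_add hτ0]; ring_nf
      have e2 : h₀ (t - τ * t) = (t * τ) ^ (-γ - 1) * (f t - f (t - t * τ)) := by
        simp only [hh₀]
        congr 2 <;> ring
      have e3 : (t * τ) ^ (-γ - 1) = t ^ (-γ) * τ ^ (-γ) * (t * τ)⁻¹ := by
        rw [show (-γ - 1 : ℝ) = -γ + (-1) by ring, Real.rpow_add htτ,
          Real.rpow_neg_one, Real.mul_rpow ht.le hτ0.le]
      have e4 : t ^ γ * t ^ (-γ) = 1 := by
        rw [← Real.rpow_add ht]; simp
      dsimp only
      rw [e2, e3, div_eq_mul_inv]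
      linear_combination ((1 - γH) * (f t - f (t - t * τ)) * (t * τ)⁻¹) * e1 -
        ((1 - γH) * (f t - f (t - t * τ)) * (t * τ)⁻¹ * τ ^ (-γ)) * e4
    rw [step1, ← integral_Ioc_eq_integral_Ioo,
      ← intervalIntegral.integral_of_le (by norm_num : (0:ℝ) ≤ 1)]
    rw [intervalIntegral.integral_const_mul]
    congr 1
    have := intervalIntegral.integral_comp_mul_right (a := (0:ℝ)) (b := 1)
      (fun y => h₀ (t - y)) ht.ne'
    simp only [zero_mul, one_mul] at this
    rw [this, intervalIntegral.integral_comp_sub_left h₀ t]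
    simp [hJ, smul_eq_mul]
  -- put it together
  have hLHS : (∫ τ in Set.Ioo 0 t, (t - τ) ^ (-γ) * f' τ)
      = ∫ σ in (0:ℝ)..t, (t - σ) ^ (-γ) * f' σ := by
    rw [intervalIntegral.integral_of_le ht.le, integral_Ioc_eq_integral_Ioo]
  rw [hLHS, hmain, hRint]
  have e4 : t ^ (1 - γ) * t ^ γ = t := by
    rw [← Real.rpow_add ht]; simp
  have key : γ / (1 - γH) * t ^ (1 - γ) * ((1 - γH) * t ^ γ * (t⁻¹ * J)) = γ * J := by
    rw [show γ / (1 - γH) * t ^ (1 - γ) * ((1 - γH) * t ^ γ * (t⁻¹ * J))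
        = (γ * ((1 - γH) * (1 - γH)⁻¹)) * ((t ^ (1 - γ) * t ^ γ) * t⁻¹) * J by
          rw [div_eq_mul_inv]; ring,
      mul_inv_cancel₀ hγH0.ne', e4, mul_inv_cancel₀ ht.ne']
    ring
  linarith [key]
end

section
/- Let d ≥ 1, 0 < α ≤ α_H < 2, λ > 0, and let u : ℝ^d → ℝ be bounded and twice continuously differentiable with bounded second derivatives. Then for every x ∈ ℝ^d, (1/2) ∫_{ℝ^d} (2u(x) − u(x−y) − u(x+y)) exp(−λ‖y‖) ‖y‖^{−(d+α)} dy = (1/2) λ^α |S^{d−1}| Γ(2−α_H) ∫_{S^{d−1}} ∫_0^∞ [(2u(x) − u(x − (r/λ)ξ) − u(x + (r/λ)ξ)) / r²] · r^{α_H−α} · q_{2−α_H}(r) dr dσ̄(ξ), where q_{2−α_H}(r) = r^{1−α_H} e^{−r} / Γ(2−α_H) is the Gamma(2−α_H, rate 1) probability density on (0,∞), σ is the surface measure on the unit sphere S^{d−1}, |S^{d−1}| = σ(S^{d−1}) = 2π^{d/2}/Γ(d/2), and σ̄ = σ/|S^{d−1}|. -/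
open MeasureTheory Real Set

/-- The surface measure on the unit sphere `S^{d-1} ⊂ ℝ^d`. -/
noncomputable def surfaceMeasure (d : ℕ) :
    Measure (Metric.sphere (0 : EuclideanSpace ℝ (Fin d)) 1) :=
  (volume : Measure (EuclideanSpace ℝ (Fin d))).toSphere

/-- `|S^{d-1}| = 2 π^{d/2} / Γ(d/2)`, the total surface measure of the unit sphere. -/
noncomputable def sphereArea (d : ℕ) : ℝ :=
  2 * Real.pi ^ ((d : ℝ) / 2) / Real.Gamma ((d : ℝ) / 2)

/-- `σ̄ = σ / |S^{d-1}|`, the uniform probability measure on the unit sphere. -/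
noncomputable def uniformSphere (d : ℕ) :
    Measure (Metric.sphere (0 : EuclideanSpace ℝ (Fin d)) 1) :=
  (ENNReal.ofReal (sphereArea d))⁻¹ • surfaceMeasure d

section Aux

variable {E : Type*} [NormedAddCommGroup E] [NormedSpace ℝ E]

/-- Second-order central difference bound. -/
lemma aux_gbound {u : E → ℝ} {C : ℝ} (hu : ContDiff ℝ 2 u)
    (hC : ∀ z, ‖iteratedFDeriv ℝ 2 u z‖ ≤ C) (x y : E) :
    |2 * u x - u (x - y) - u (x + y)| ≤ 2 * C * ‖y‖ ^ 2 := by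
  have hC0 : 0 ≤ C := le_trans (norm_nonneg _) (hC x)
  have hdiff : Differentiable ℝ u := hu.differentiable (by norm_num)
  have hw : Differentiable ℝ (fderiv ℝ u) :=
    (hu.fderiv_right (m := 1) (by norm_num)).differentiable (by norm_num)
  have hwbd : ∀ z, ‖fderiv ℝ (fderiv ℝ u) z‖ ≤ C := by
    intro z
    have h1 : ‖fderiv ℝ (fderiv ℝ u) z‖
        = ‖iteratedFDeriv ℝ 0 (fderiv ℝ (fderiv ℝ u)) z‖ := (norm_iteratedFDeriv_zero (𝕜 := ℝ) (f := fderiv ℝ (fderiv ℝ u)) (x := z)).symm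
    rw [h1, norm_iteratedFDeriv_fderiv, norm_iteratedFDeriv_fderiv]
    exact hC z
  have hlip : ∀ a b : E, ‖fderiv ℝ u a - fderiv ℝ u b‖ ≤ C * ‖a - b‖ := fun a b =>
    Convex.norm_image_sub_le_of_norm_fderiv_le (fun z _ => hw z)
      (fun z _ => hwbd z) convex_univ (mem_univ b) (mem_univ a)
  set φ : E → ℝ := fun z => u (x + z) + u (x - z) with hφ
  have hφd : ∀ z : E, HasFDerivAt φ (fderiv ℝ u (x + z) - fderiv ℝ u (x - z)) z := by
    intro z
    have h1 : HasFDerivAt (fun w : E => u (x + w)) (fderiv ℝ u (x + z)) z := by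
      have := (hdiff (x + z)).hasFDerivAt.comp z ((hasFDerivAt_id z).const_add x)
      simpa [Function.comp_def] using this
    have h2 : HasFDerivAt (fun w : E => u (x - w)) (-(fderiv ℝ u (x - z))) z := by
      have := (hdiff (x - z)).hasFDerivAt.comp z ((hasFDerivAt_id z).const_sub x)
      simpa [Function.comp_def] using this
    simpa [hφ, sub_eq_add_neg, Pi.add_def] using h1.add h2
  have key : ‖φ y - φ 0‖ ≤ (2 * C * ‖y‖) * ‖y - 0‖ := by
    refine Convex.norm_image_sub_le_of_norm_fderiv_le
      (fun z _ => (hφd z).differentiableAt) (fun z hz => ?_) (convex_closedBall _ _)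
      (Metric.mem_closedBall_self (norm_nonneg y)) (mem_closedBall_zero_iff.mpr le_rfl)
    have hz' : ‖z‖ ≤ ‖y‖ := mem_closedBall_zero_iff.mp hz
    rw [(hφd z).fderiv]
    have h2z : (x + z) - (x - z) = z + z := by abel
    calc ‖fderiv ℝ u (x + z) - fderiv ℝ u (x - z)‖ ≤ C * ‖(x + z) - (x - z)‖ := hlip _ _
      _ = C * ‖z + z‖ := by rw [h2z]
      _ ≤ C * (‖z‖ + ‖z‖) := mul_le_mul_of_nonneg_left (norm_add_le _ _) hC0
      _ ≤ 2 * C * ‖y‖ := by nlinarith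
  have hgy : 2 * u x - u (x - y) - u (x + y) = φ 0 - φ y := by
    simp only [hφ, add_zero, sub_zero]; ring
  rw [hgy]
  calc |φ 0 - φ y| = ‖φ y - φ 0‖ := by rw [abs_sub_comm]; rfl
    _ ≤ (2 * C * ‖y‖) * ‖y - 0‖ := key
    _ = 2 * C * ‖y‖ ^ 2 := by rw [sub_zero]; ring

end Aux

/-- 1-D integrability of the dominating radial profile. -/
lemma aux_oneD {α lam C M : ℝ} (hα : 0 < α) (hα2 : α < 2) (hlam : 0 < lam)
    (hC0 : 0 ≤ C) (hM0 : 0 ≤ M) :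
    IntegrableOn (fun r : ℝ =>
      min (2 * C * r ^ 2) (4 * M) * Real.exp (-(lam * r)) * r ^ (-(1 + α)))
      (Ioi (0 : ℝ)) volume := by
  have hcontOn : ∀ s : Set ℝ, s ⊆ Ioi 0 → ContinuousOn (fun r : ℝ =>
      min (2 * C * r ^ 2) (4 * M) * Real.exp (-(lam * r)) * r ^ (-(1 + α))) s := by
    intro s hs
    refine ContinuousOn.mul (ContinuousOn.mul ?_ ?_) ?_
    · exact ((continuous_const.mul (continuous_pow 2)).min continuous_const).continuousOn
    · exact (Real.continuous_exp.comp (continuous_const.mul continuous_id).neg).continuousOn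
    · intro t ht
      exact (Real.continuousAt_rpow_const t _ (Or.inl (ne_of_gt (hs ht)))).continuousWithinAt
  rw [← Ioc_union_Ioi_eq_Ioi (zero_le_one (α := ℝ))]
  apply IntegrableOn.union
  · have hint : IntegrableOn (fun r : ℝ => r ^ ((1 : ℝ) - α)) (Ioc (0:ℝ) 1) volume :=
      (intervalIntegrable_iff_integrableOn_Ioc_of_le zero_le_one).mp
        (intervalIntegral.intervalIntegrable_rpow' (by linarith))
    refine Integrable.mono' (hint.const_mul (2 * C))
      ((hcontOn _ Ioc_subset_Ioi_self).aestronglyMeasurable measurableSet_Ioc) ?_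
    filter_upwards [ae_restrict_mem measurableSet_Ioc] with r hr
    have hr0 : 0 < r := hr.1
    have hmin0 : 0 ≤ min (2 * C * r ^ 2) (4 * M) := le_min (by positivity) (by positivity)
    have hnn : 0 ≤ min (2 * C * r ^ 2) (4 * M) * Real.exp (-(lam * r)) * r ^ (-(1 + α)) :=
      mul_nonneg (mul_nonneg hmin0 (Real.exp_pos _).le) (Real.rpow_nonneg hr0.le _)
    rw [Real.norm_eq_abs, abs_of_nonneg hnn]
    have hexp1 : Real.exp (-(lam * r)) ≤ 1 := Real.exp_le_one_iff.mpr (by nlinarith)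
    have hstep : min (2 * C * r ^ 2) (4 * M) * Real.exp (-(lam * r)) ≤ (2 * C * r ^ 2) * 1 :=
      mul_le_mul (min_le_left _ _) hexp1 (Real.exp_pos _).le (by positivity)
    calc min (2 * C * r ^ 2) (4 * M) * Real.exp (-(lam * r)) * r ^ (-(1 + α))
        ≤ (2 * C * r ^ 2) * 1 * r ^ (-(1 + α)) :=
          mul_le_mul_of_nonneg_right hstep (Real.rpow_nonneg hr0.le _)
      _ = 2 * C * (r ^ (2:ℕ) * r ^ (-(1 + α))) := by ring
      _ = 2 * C * r ^ ((1 : ℝ) - α) := by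
          rw [← Real.rpow_natCast r 2, ← Real.rpow_add hr0]
          congr 1
          push_cast
          ring
  · refine Integrable.mono' ((exp_neg_integrableOn_Ioi 1 hlam).const_mul (4 * M))
      ((hcontOn _ (Ioi_subset_Ioi zero_le_one)).aestronglyMeasurable measurableSet_Ioi) ?_
    filter_upwards [ae_restrict_mem measurableSet_Ioi] with r hr
    have hr1 : 1 < r := hr
    have hr0 : 0 < r := lt_trans one_pos hr1
    have hmin0 : 0 ≤ min (2 * C * r ^ 2) (4 * M) := le_min (by positivity) (by positivity)
    have hnn : 0 ≤ min (2 * C * r ^ 2) (4 * M) * Real.exp (-(lam * r)) * r ^ (-(1 + α)) :=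
      mul_nonneg (mul_nonneg hmin0 (Real.exp_pos _).le) (Real.rpow_nonneg hr0.le _)
    rw [Real.norm_eq_abs, abs_of_nonneg hnn]
    have hrp1 : r ^ (-(1 + α)) ≤ 1 :=
      Real.rpow_le_one_of_one_le_of_nonpos hr1.le (by linarith)
    have hstep : min (2 * C * r ^ 2) (4 * M) * Real.exp (-(lam * r))
        ≤ (4 * M) * Real.exp (-(lam * r)) :=
      mul_le_mul_of_nonneg_right (min_le_right _ _) (Real.exp_pos _).le
    calc min (2 * C * r ^ 2) (4 * M) * Real.exp (-(lam * r)) * r ^ (-(1 + α))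
        ≤ (4 * M) * Real.exp (-(lam * r)) * 1 :=
          mul_le_mul hstep hrp1 (Real.rpow_nonneg hr0.le _) (by positivity)
      _ = 4 * M * Real.exp (-lam * r) := by rw [mul_one, neg_mul]

theorem stmt_15 {d : ℕ} (hd : 1 ≤ d) {α αH lam : ℝ}
    (hα : 0 < α) (hααH : α ≤ αH) (hαH : αH < 2) (hlam : 0 < lam)
    {u : EuclideanSpace ℝ (Fin d) → ℝ} (hu : ContDiff ℝ 2 u)
    (hM : ∃ M, ∀ z, |u z| ≤ M)
    (hC : ∃ C, ∀ z, ‖iteratedFDeriv ℝ 2 u z‖ ≤ C)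
    (x : EuclideanSpace ℝ (Fin d)) :
    (1 / 2) * (∫ y : EuclideanSpace ℝ (Fin d),
        (2 * u x - u (x - y) - u (x + y)) * Real.exp (-(lam * ‖y‖)) * ‖y‖ ^ (-((d : ℝ) + α))) =
      (1 / 2) * lam ^ α * sphereArea d * Real.Gamma (2 - αH) *
        ∫ ξ : Metric.sphere (0 : EuclideanSpace ℝ (Fin d)) 1,
          (∫ r in Set.Ioi (0 : ℝ),
            ((2 * u x - u (x - (r / lam) • (ξ : EuclideanSpace ℝ (Fin d)))
                - u (x + (r / lam) • (ξ : EuclideanSpace ℝ (Fin d)))) / r ^ 2) *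
              r ^ (αH - α) * (r ^ (1 - αH) * Real.exp (-r) / Real.Gamma (2 - αH)))
          ∂(uniformSphere d) := by
  obtain ⟨M, hM⟩ := hM
  obtain ⟨C, hC⟩ := hC
  have hM0 : 0 ≤ M := le_trans (abs_nonneg _) (hM x)
  have hC0 : 0 ≤ C := le_trans (norm_nonneg _) (hC x)
  have hα2 : α < 2 := lt_of_le_of_lt hααH hαH
  haveI : Nonempty (Fin d) := ⟨⟨0, hd⟩⟩
  haveI : Nontrivial (EuclideanSpace ℝ (Fin d)) := by
    refine ⟨EuclideanSpace.single ⟨0, hd⟩ (1:ℝ), 0, fun h => ?_⟩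
    simpa using congrArg (fun v : EuclideanSpace ℝ (Fin d) => v ⟨0, hd⟩) h
  have hΓpos : 0 < Real.Gamma (2 - αH) := Real.Gamma_pos_of_pos (by linarith)
  have hApos : 0 < sphereArea d := by
    have hd2 : 0 < (d : ℝ) / 2 := by
      have : (0:ℝ) < d := by exact_mod_cast lt_of_lt_of_le zero_lt_one hd
      linarith
    exact div_pos (mul_pos two_pos (Real.rpow_pos_of_pos Real.pi_pos _))
      (Real.Gamma_pos_of_pos hd2)
  have hfr : Module.finrank ℝ (EuclideanSpace ℝ (Fin d)) = d := finrank_euclideanSpace_fin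
  set n : ℕ := Module.finrank ℝ (EuclideanSpace ℝ (Fin d)) - 1 with hn
  have hncast : (n : ℝ) = (d : ℝ) - 1 := by
    rw [hn, hfr, Nat.cast_sub hd, Nat.cast_one]
  set f : EuclideanSpace ℝ (Fin d) → ℝ := fun y =>
    (2 * u x - u (x - y) - u (x + y)) * Real.exp (-(lam * ‖y‖)) * ‖y‖ ^ (-((d : ℝ) + α))
    with hf
  set ν : Measure (Ioi (0:ℝ)) := Measure.volumeIoiPow n with hν
  set σm : Measure (Metric.sphere (0 : EuclideanSpace ℝ (Fin d)) 1) :=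
    (volume : Measure (EuclideanSpace ℝ (Fin d))).toSphere with hσm
  set W : Metric.sphere (0 : EuclideanSpace ℝ (Fin d)) 1 → ℝ → ℝ := fun ξ s =>
    (2 * u x - u (x - (s / lam) • (ξ : EuclideanSpace ℝ (Fin d)))
      - u (x + (s / lam) • (ξ : EuclideanSpace ℝ (Fin d)))) * Real.exp (-s) * s ^ (-(1 + α))
    with hW
  have hnorm_smul : ∀ (ξ : Metric.sphere (0 : EuclideanSpace ℝ (Fin d)) 1) (r : ℝ), 0 < r →
      ‖r • (ξ : EuclideanSpace ℝ (Fin d))‖ = r := by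
    intro ξ r hr
    rw [norm_smul, mem_sphere_zero_iff_norm.mp ξ.2, mul_one, Real.norm_eq_abs, abs_of_pos hr]
  have hfix : ∀ p : Metric.sphere (0 : EuclideanSpace ℝ (Fin d)) 1 × Ioi (0:ℝ),
      f ((p.2 : ℝ) • (p.1 : EuclideanSpace ℝ (Fin d))) =
      (2 * u x - u (x - (p.2:ℝ) • (p.1 : EuclideanSpace ℝ (Fin d)))
          - u (x + (p.2:ℝ) • (p.1 : EuclideanSpace ℝ (Fin d)))) *
        Real.exp (-(lam * (p.2:ℝ))) * (p.2:ℝ) ^ (-((d : ℝ) + α)) := by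
    intro p
    simp only [hf]
    rw [hnorm_smul p.1 p.2 (mem_Ioi.mp p.2.2)]
  -- pointwise bound on the central difference
  have hgb : ∀ y : EuclideanSpace ℝ (Fin d),
      |2 * u x - u (x - y) - u (x + y)| ≤ min (2 * C * ‖y‖ ^ 2) (4 * M) := by
    intro y
    refine le_min (aux_gbound hu hC x y) ?_
    have h1 := hM (x - y)
    have h2 := hM (x + y)
    have h3 := hM x
    have e1 : |2 * u x - u (x - y) - u (x + y)|
        ≤ |2 * u x - u (x - y)| + |u (x + y)| := abs_sub _ _
    have e2 : |2 * u x - u (x - y)| ≤ |2 * u x| + |u (x - y)| := abs_sub _ _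
    have e3 : |2 * u x| = 2 * |u x| := by rw [abs_mul, abs_two]
    linarith
  -- dominating radial profile
  set Ψ : ℝ → ℝ := fun r =>
    min (2 * C * r ^ 2) (4 * M) * Real.exp (-(lam * r)) * r ^ (-((d : ℝ) + α)) with hΨ
  have hΨint : Integrable (fun r : Ioi (0:ℝ) => Ψ (r : ℝ)) ν := by
    rw [hν, Measure.volumeIoiPow,
      integrable_withDensity_iff ((measurable_subtype_coe.pow_const n).ennreal_ofReal)
        (ae_of_all _ fun r => ENNReal.ofReal_lt_top)]
    have h2 : IntegrableOn (fun s : ℝ => Ψ s * s ^ n) (Ioi 0) volume := by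
      refine (aux_oneD hα hα2 hlam hC0 hM0 (lam := lam) (C := C) (M := M)).congr_fun
        (fun s hs => ?_) measurableSet_Ioi
      have hs0 : (0:ℝ) < s := hs
      simp only [hΨ]
      have hr1 : (s:ℝ) ^ (-((d : ℝ) + α)) * s ^ (n:ℕ) = s ^ (-(1 + α)) := by
        rw [← Real.rpow_natCast s n, ← Real.rpow_add hs0, hncast]
        congr 1
        ring
      calc min (2 * C * s ^ 2) (4 * M) * Real.exp (-(lam * s)) * s ^ (-(1 + α))
          = min (2 * C * s ^ 2) (4 * M) * Real.exp (-(lam * s))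
              * (s ^ (-((d : ℝ) + α)) * s ^ (n:ℕ)) := by rw [hr1]
        _ = min (2 * C * s ^ 2) (4 * M) * Real.exp (-(lam * s)) * s ^ (-((d : ℝ) + α))
              * s ^ (n:ℕ) := by ring
    have h3 := ((MeasurableEmbedding.subtype_coe measurableSet_Ioi).integrableOn_iff_comap
      (by rw [Subtype.range_coe])).mp h2
    have hpre : ((Subtype.val : Ioi (0:ℝ) → ℝ) ⁻¹' Ioi (0:ℝ)) = univ := by
      ext r; simpa using r.2
    rw [hpre, integrableOn_univ] at h3
    refine h3.congr (ae_of_all _ fun r => ?_)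
    simp only [Function.comp]
    rw [ENNReal.toReal_ofReal (pow_nonneg (le_of_lt (mem_Ioi.mp r.2)) n)]
  -- integrability on the product space
  have hGmeas : AEStronglyMeasurable
      (fun p : Metric.sphere (0 : EuclideanSpace ℝ (Fin d)) 1 × Ioi (0:ℝ) =>
        f ((p.2:ℝ) • (p.1 : EuclideanSpace ℝ (Fin d)))) (σm.prod ν) := by
    have hsmul : Continuous fun p : Metric.sphere (0 : EuclideanSpace ℝ (Fin d)) 1 × Ioi (0:ℝ) =>
        (p.2:ℝ) • (p.1 : EuclideanSpace ℝ (Fin d)) :=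
      (continuous_subtype_val.comp continuous_snd).smul
        (continuous_subtype_val.comp continuous_fst)
    have hrpow : Continuous fun p : Metric.sphere (0 : EuclideanSpace ℝ (Fin d)) 1 × Ioi (0:ℝ) =>
        (p.2:ℝ) ^ (-((d : ℝ) + α)) := by
      exact (continuous_subtype_val.comp continuous_snd).rpow_const
        (fun p => Or.inl (ne_of_gt (mem_Ioi.mp p.2.2)))
    have hcont : Continuous fun p : Metric.sphere (0 : EuclideanSpace ℝ (Fin d)) 1 × Ioi (0:ℝ) =>
        (2 * u x - u (x - (p.2:ℝ) • (p.1 : EuclideanSpace ℝ (Fin d)))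
            - u (x + (p.2:ℝ) • (p.1 : EuclideanSpace ℝ (Fin d)))) *
          Real.exp (-(lam * (p.2:ℝ))) * (p.2:ℝ) ^ (-((d : ℝ) + α)) := by
      refine Continuous.mul (Continuous.mul ?_ ?_) hrpow
      · exact (continuous_const.sub (hu.continuous.comp (continuous_const.sub hsmul))).sub
          (hu.continuous.comp (continuous_const.add hsmul))
      · exact Real.continuous_exp.comp
          ((continuous_const.mul (continuous_subtype_val.comp continuous_snd)).neg)
    exact hcont.aestronglyMeasurable.congr (ae_of_all _ fun p => (hfix p).symm)
  have hGint : Integrable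
      (fun p : Metric.sphere (0 : EuclideanSpace ℝ (Fin d)) 1 × Ioi (0:ℝ) =>
        f ((p.2:ℝ) • (p.1 : EuclideanSpace ℝ (Fin d)))) (σm.prod ν) := by
    have hdom : Integrable
        (fun p : Metric.sphere (0 : EuclideanSpace ℝ (Fin d)) 1 × Ioi (0:ℝ) =>
          (1:ℝ) * Ψ (p.2:ℝ)) (σm.prod ν) :=
      Integrable.mul_prod (integrable_const 1) hΨint
    refine hdom.mono' hGmeas (ae_of_all _ fun p => ?_)
    rw [hfix p, one_mul]
    have hp0 : (0:ℝ) < (p.2:ℝ) := mem_Ioi.mp p.2.2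
    have h1 := hgb ((p.2:ℝ) • (p.1 : EuclideanSpace ℝ (Fin d)))
    rw [hnorm_smul p.1 _ hp0] at h1
    simp only [hΨ]
    rw [Real.norm_eq_abs, abs_mul, abs_mul, Real.abs_exp,
      abs_of_nonneg (Real.rpow_nonneg hp0.le _)]
    refine mul_le_mul_of_nonneg_right ?_ (Real.rpow_nonneg hp0.le _)
    exact mul_le_mul_of_nonneg_right h1 (Real.exp_pos _).le
  -- polar decomposition of the left-hand side
  have hA : (∫ y, f y) = ∫ p : Metric.sphere (0 : EuclideanSpace ℝ (Fin d)) 1 × Ioi (0:ℝ),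
      f ((p.2:ℝ) • (p.1 : EuclideanSpace ℝ (Fin d))) ∂(σm.prod ν) := by
    calc (∫ y, f y)
        = ∫ y in ({(0 : EuclideanSpace ℝ (Fin d))}ᶜ : Set (EuclideanSpace ℝ (Fin d))), f y := by
          rw [restrict_compl_singleton]
      _ = ∫ y : ({(0 : EuclideanSpace ℝ (Fin d))}ᶜ : Set (EuclideanSpace ℝ (Fin d))), f y.1
            ∂(Measure.comap Subtype.val volume) :=
          (integral_subtype_comap (measurableSet_singleton _).compl f).symm
      _ = ∫ p : Metric.sphere (0 : EuclideanSpace ℝ (Fin d)) 1 × Ioi (0:ℝ),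
            f ((p.2:ℝ) • (p.1 : EuclideanSpace ℝ (Fin d))) ∂(σm.prod ν) := by
          rw [hσm, hν, hn,
            ← (Measure.measurePreserving_homeomorphUnitSphereProd
                (volume : Measure (EuclideanSpace ℝ (Fin d)))).integral_comp
              (Homeomorph.measurableEmbedding _)
              (fun p : Metric.sphere (0 : EuclideanSpace ℝ (Fin d)) 1 × Ioi (0:ℝ) =>
                f ((p.2:ℝ) • (p.1 : EuclideanSpace ℝ (Fin d))))]
          refine integral_congr_ae (ae_of_all _ fun y => ?_)
          simp only [homeomorphUnitSphereProd_apply_snd_coe,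
            homeomorphUnitSphereProd_apply_fst_coe]
          rw [smul_inv_smul₀ (norm_ne_zero_iff.mpr (Set.mem_compl_singleton_iff.mp y.2))]
  -- Fubini
  have hFub : ∫ p : Metric.sphere (0 : EuclideanSpace ℝ (Fin d)) 1 × Ioi (0:ℝ),
            f ((p.2:ℝ) • (p.1 : EuclideanSpace ℝ (Fin d))) ∂(σm.prod ν)
      = ∫ ξ : Metric.sphere (0 : EuclideanSpace ℝ (Fin d)) 1,
          (∫ r : Ioi (0:ℝ), f ((r:ℝ) • (ξ : EuclideanSpace ℝ (Fin d))) ∂ν) ∂σm :=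
    integral_prod _ hGint
  -- inner integral over the weighted measure
  have hD : ∀ ξ : Metric.sphere (0 : EuclideanSpace ℝ (Fin d)) 1,
      (∫ r : Ioi (0:ℝ), f ((r:ℝ) • (ξ : EuclideanSpace ℝ (Fin d))) ∂ν)
      = ∫ r in Ioi (0:ℝ), (r ^ n) • f (r • (ξ : EuclideanSpace ℝ (Fin d))) := by
    intro ξ
    rw [hν, Measure.volumeIoiPow]
    simp only [ENNReal.ofReal]
    rw [integral_withDensity_eq_integral_smul
        ((measurable_subtype_coe.pow_const _).real_toNNReal),
      integral_subtype_comap measurableSet_Ioi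
        (fun r : ℝ => (r ^ n).toNNReal • f (r • (ξ : EuclideanSpace ℝ (Fin d))))]
    refine setIntegral_congr_fun measurableSet_Ioi fun r hr => ?_
    rw [NNReal.smul_def, Real.coe_toNNReal _ (pow_nonneg (le_of_lt hr) _)]
  -- change of variables in the radial integral
  have hE1 : ∀ ξ : Metric.sphere (0 : EuclideanSpace ℝ (Fin d)) 1,
      (∫ r in Ioi (0:ℝ), (r ^ n) • f (r • (ξ : EuclideanSpace ℝ (Fin d))))
      = lam ^ α * ∫ s in Ioi (0:ℝ), W ξ s := by
    intro ξ
    have hne : lam ≠ 0 := hlam.ne'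
    have hstep : ∀ r ∈ Ioi (0:ℝ), (r ^ n) • f (r • (ξ : EuclideanSpace ℝ (Fin d)))
        = lam ^ ((1:ℝ) + α) * W ξ (lam * r) := by
      intro r hr
      have hr0 : (0:ℝ) < r := hr
      have hr1 : (r:ℝ) ^ (n:ℕ) * r ^ (-((d:ℝ) + α)) = r ^ (-(1 + α)) := by
        rw [← Real.rpow_natCast r n, ← Real.rpow_add hr0, hncast]
        congr 1
        ring
      have hl1 : lam ^ ((1:ℝ) + α) * lam ^ (-(1 + α)) = 1 := by
        rw [← Real.rpow_add hlam, show (1:ℝ) + α + -(1 + α) = 0 by ring, Real.rpow_zero]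
      simp only [hW, hf, smul_eq_mul]
      rw [hnorm_smul ξ r hr0, mul_div_cancel_left₀ r hne, Real.mul_rpow hlam.le hr0.le]
      have habs : ∀ g e : ℝ, (r:ℝ) ^ (n:ℕ) * (g * e * r ^ (-((d:ℝ) + α)))
          = lam ^ ((1:ℝ) + α) * (g * e * (lam ^ (-(1 + α)) * r ^ (-(1 + α)))) := by
        intro g e
        calc (r:ℝ) ^ (n:ℕ) * (g * e * r ^ (-((d:ℝ) + α)))
            = g * e * ((r:ℝ) ^ (n:ℕ) * r ^ (-((d:ℝ) + α))) := by ring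
          _ = g * e * r ^ (-(1 + α)) := by rw [hr1]
          _ = (lam ^ ((1:ℝ) + α) * lam ^ (-(1 + α))) * (g * e * r ^ (-(1 + α))) := by
              rw [hl1, one_mul]
          _ = lam ^ ((1:ℝ) + α) * (g * e * (lam ^ (-(1 + α)) * r ^ (-(1 + α)))) := by ring
      exact habs _ _
    rw [setIntegral_congr_fun measurableSet_Ioi hstep, integral_const_mul,
      integral_comp_mul_left_Ioi (W ξ) 0 hlam, mul_zero, smul_eq_mul, ← mul_assoc]
    have hcl : lam ^ ((1:ℝ) + α) * lam⁻¹ = lam ^ α := by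
      rw [← Real.rpow_neg_one lam, ← Real.rpow_add hlam]
      congr 1
      ring
    rw [hcl]
  -- the inner integral on the right-hand side
  have hK : ∀ ξ : Metric.sphere (0 : EuclideanSpace ℝ (Fin d)) 1,
      (∫ r in Ioi (0:ℝ),
        ((2 * u x - u (x - (r / lam) • (ξ : EuclideanSpace ℝ (Fin d)))
            - u (x + (r / lam) • (ξ : EuclideanSpace ℝ (Fin d)))) / r ^ 2) *
          r ^ (αH - α) * (r ^ (1 - αH) * Real.exp (-r) / Real.Gamma (2 - αH)))
      = (Real.Gamma (2 - αH))⁻¹ * ∫ s in Ioi (0:ℝ), W ξ s := by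
    intro ξ
    rw [← integral_const_mul]
    refine setIntegral_congr_fun measurableSet_Ioi fun r hr => ?_
    have hr0 : (0:ℝ) < r := hr
    have hr2 : (r:ℝ) ^ (αH - α) * r ^ ((1:ℝ) - αH) = r ^ ((1:ℝ) - α) := by
      rw [← Real.rpow_add hr0]
      congr 1
      ring
    have hr3 : (r:ℝ) ^ ((1:ℝ) - α) / r ^ (2:ℕ) = r ^ (-(1 + α)) := by
      rw [← Real.rpow_natCast r 2, ← Real.rpow_sub hr0]
      congr 1
      push_cast
      ring
    simp only [hW]
    have habs : ∀ g e : ℝ, g / r ^ (2:ℕ) * r ^ (αH - α) * (r ^ ((1:ℝ) - αH) * e / Real.Gamma (2 - αH))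
        = (Real.Gamma (2 - αH))⁻¹ * (g * e * r ^ (-(1 + α))) := by
      intro g e
      rw [← hr3, ← hr2]
      field_simp
    exact habs _ _
  -- assemble
  rw [hA, hFub]
  have hL : ∫ ξ : Metric.sphere (0 : EuclideanSpace ℝ (Fin d)) 1,
      (∫ r : Ioi (0:ℝ), f ((r:ℝ) • (ξ : EuclideanSpace ℝ (Fin d))) ∂ν) ∂σm
      = lam ^ α * ∫ ξ : Metric.sphere (0 : EuclideanSpace ℝ (Fin d)) 1,
          (∫ s in Ioi (0:ℝ), W ξ s) ∂σm := by
    rw [← integral_const_mul]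
    exact integral_congr_ae (ae_of_all _ fun ξ => (hD ξ).trans (hE1 ξ))
  rw [hL]
  have hR : ∫ ξ : Metric.sphere (0 : EuclideanSpace ℝ (Fin d)) 1,
      (∫ r in Ioi (0:ℝ),
        ((2 * u x - u (x - (r / lam) • (ξ : EuclideanSpace ℝ (Fin d)))
            - u (x + (r / lam) • (ξ : EuclideanSpace ℝ (Fin d)))) / r ^ 2) *
          r ^ (αH - α) * (r ^ (1 - αH) * Real.exp (-r) / Real.Gamma (2 - αH))) ∂σm
      = (Real.Gamma (2 - αH))⁻¹ * ∫ ξ : Metric.sphere (0 : EuclideanSpace ℝ (Fin d)) 1,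
          (∫ s in Ioi (0:ℝ), W ξ s) ∂σm := by
    rw [← integral_const_mul]
    exact integral_congr_ae (ae_of_all _ fun ξ => hK ξ)
  have hun : uniformSphere d = (ENNReal.ofReal (sphereArea d))⁻¹ • σm := by
    rw [uniformSphere, surfaceMeasure, hσm]
  rw [hun, integral_smul_measure, ENNReal.toReal_inv, ENNReal.toReal_ofReal hApos.le,
    smul_eq_mul, hR]
  field_simp
end
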